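/- arXiv:1010.3889 — 2 statements merged into one kernel-verified Lean document; each statement's English description precedes it below -/
import Mathlib

section
/- (Corollary 4) For every integer n ≥ 0, ξ_{n,1/q}(2) = (−1)^n·q^n·ξ_{n,q}(−1), where ξ_{n,1/q} denotes the q-Euler polynomial with parameter 1/q in place of q. -/
open Finset Filter

/-- `[a]_q = (1 - q^a)/(1 - q)` for `a : ℤ`. -/
noncomputable def qnum {p : ℕ} [Fact p.Prime] (q : ℚ_[p]) (a : ℤ) : ℚ_[p] :=
  (1 - q ^ a) / (1 - q)

/-- Kim's q-Euler polynomial `ξ_{n,q}(x)` (closed form). -/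
noncomputable def xi {p : ℕ} [Fact p.Prime] (q : ℚ_[p]) (n : ℕ) (x : ℤ) : ℚ_[p] :=
  ((1 + q) / (1 - q) ^ n) *
    ∑ l ∈ Finset.range (n + 1),
      (n.choose l : ℚ_[p]) * (-1) ^ l * q ^ ((l : ℤ) * x) / (1 + q ^ (l + 1))

/-- The fermionic p-adic `r`-integral statement:
`∫_{ℤ_p} g dμ_{-r} = L` means the Riemann-type sums
`(1/[p^N]_{-r}) · Σ_{x=0}^{p^N-1} g(x) (-r)^x` converge to `L`. -/
def fermionicIntegral (p : ℕ) [Fact p.Prime] (r : ℚ_[p]) (g : ℕ → ℚ_[p]) (L : ℚ_[p]) : Prop :=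
  Filter.Tendsto
    (fun N : ℕ => ((1 + r) / (1 - (-r) ^ (p ^ N))) * ∑ x ∈ Finset.range (p ^ N), g x * (-r) ^ x)
    Filter.atTop (nhds L)

/-- The q-Bernstein polynomial `B_{k,n}(x,q) = C(n,k) [x]_q^k [1-x]_{1/q}^{n-k}`. -/
noncomputable def bern {p : ℕ} [Fact p.Prime] (q : ℚ_[p]) (k n : ℕ) (x : ℤ) : ℚ_[p] :=
  (n.choose k : ℚ_[p]) * (qnum q x) ^ k * (qnum q⁻¹ (1 - x)) ^ (n - k)

open Finset

/-- norm of 2 is 1 for odd p -/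
lemma norm_two_eq_one (p : ℕ) [Fact p.Prime] (hp : Odd p) : ‖(2 : ℚ_[p])‖ = 1 := by
  have hle : ‖((2:ℤ) : ℚ_[p])‖ ≤ 1 := Padic.norm_int_le_one 2
  have hnlt : ¬ ‖((2:ℤ) : ℚ_[p])‖ < 1 := by
    rw [Padic.norm_intCast_lt_one_iff]
    intro hdvd
    have h2 : p ∣ 2 := by exact_mod_cast hdvd
    have he := (Nat.prime_dvd_prime_iff_eq (Fact.out) Nat.prime_two).mp h2
    rw [he] at hp
    exact (by decide : ¬ Odd 2) hp
  have : ‖((2:ℤ) : ℚ_[p])‖ = 1 := le_antisymm hle (not_lt.mp hnlt)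
  simpa using this

lemma norm_q_eq_one {p : ℕ} [Fact p.Prime] {r : ℚ_[p]} (hr : ‖1 - r‖ < 1) : ‖r‖ = 1 := by
  have h : r = 1 + (-(1 - r)) := by ring
  have hne : ‖(1:ℚ_[p])‖ ≠ ‖-(1 - r)‖ := by
    rw [norm_one, norm_neg]; exact hr.ne'
  rw [h, Padic.add_eq_max_of_ne hne, norm_one, norm_neg]
  exact max_eq_left (le_of_lt hr)

lemma norm_one_sub_pow {p : ℕ} [Fact p.Prime] {r : ℚ_[p]} (hr : ‖1 - r‖ < 1) (m : ℕ) :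
    ‖1 - r ^ m‖ < 1 := by
  induction m with
  | zero => simpa using one_pos
  | succ m ih =>
      have h : 1 - r ^ (m+1) = (1 - r ^ m) + r ^ m * (1 - r) := by ring
      rw [h]
      refine lt_of_le_of_lt (Padic.nonarchimedean _ _) ?_
      rw [max_lt_iff]
      refine ⟨ih, ?_⟩
      rw [norm_mul, norm_pow, norm_q_eq_one hr]
      simpa using hr

lemma one_add_pow_ne {p : ℕ} [Fact p.Prime] (hp : Odd p) {r : ℚ_[p]} (hr : ‖1 - r‖ < 1)
    (m : ℕ) : 1 + r ^ m ≠ 0 := by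
  intro h
  have h2 : (1 : ℚ_[p]) - r ^ m = 2 := by
    have : r ^ m = -1 := by linear_combination h
    rw [this]; ring
  have := norm_one_sub_pow hr m
  rw [h2, norm_two_eq_one p hp] at this
  exact lt_irrefl 1 this

theorem stmt5 (p : ℕ) [Fact p.Prime] (hp : Odd p) (q : ℚ_[p]) (hq : ‖1 - q‖ < 1) (hq1 : q ≠ 1) (n : ℕ) :
    xi q⁻¹ n 2 = (-1) ^ n * q ^ n * xi q n (-1) := by
  have hq0 : q ≠ 0 := by
    intro h; rw [h] at hq; simp at hq
  have hqinv : ‖1 - q⁻¹‖ < 1 := by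
    have : (1 : ℚ_[p]) - q⁻¹ = -(q⁻¹ * (1 - q)) := by field_simp; ring
    rw [this, norm_neg, norm_mul, norm_inv, norm_q_eq_one hq]
    simpa using hq
  have hqs : (1 : ℚ_[p]) - q ≠ 0 := sub_ne_zero.mpr (fun h => hq1 h.symm)
  have hqs' : (1 : ℚ_[p]) - q⁻¹ ≠ 0 := by
    intro h
    have : q⁻¹ = 1 := by linear_combination -h
    exact hq1 (by rw [← inv_inv q, this, inv_one])
  have hne : ∀ l : ℕ, (1 : ℚ_[p]) + q ^ (l+1) ≠ 0 := fun l => one_add_pow_ne hp hq (l+1)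
  have hne' : ∀ l : ℕ, (1 : ℚ_[p]) + (q⁻¹) ^ (l+1) ≠ 0 := fun l => one_add_pow_ne hp hqinv (l+1)
  have hterm : ∀ l ∈ Finset.range (n+1),
      (n.choose l : ℚ_[p]) * (-1) ^ l * (q⁻¹) ^ ((l:ℤ) * 2) / (1 + (q⁻¹) ^ (l+1))
      = q * ((n.choose l : ℚ_[p]) * (-1) ^ l * q ^ ((l:ℤ) * (-1)) / (1 + q ^ (l+1))) := by
    intro l _
    have e1 : (q⁻¹ : ℚ_[p]) ^ ((l:ℤ) * 2) = (q⁻¹) ^ (2*l) := by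
      rw [show (l:ℤ)*2 = ((2*l : ℕ):ℤ) by push_cast; ring, zpow_natCast]
    have e2 : q ^ ((l:ℤ) * (-1)) = (q⁻¹) ^ l := by
      rw [show (l:ℤ)*(-1) = -(l:ℤ) by ring, zpow_neg, zpow_natCast, inv_pow]
    rw [e1, e2]
    have h1 := hne l
    have h2 := hne' l
    have e3 : (1 : ℚ_[p]) + (q⁻¹)^(l+1) = (q⁻¹)^(l+1) * (1 + q^(l+1)) := by
      rw [mul_add, mul_one, ← mul_pow, inv_mul_cancel₀ hq0, one_pow, add_comm]
    rw [e3]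
    field_simp
    have e4 : q * (1/q)^(l+1) = (1/q)^l := by
      rw [pow_succ, mul_comm, mul_assoc, one_div, inv_mul_cancel₀ hq0, mul_one]
    rw [mul_assoc (n.choose l : ℚ_[p]) q, e4, mul_assoc, ← pow_add, two_mul]
  simp only [xi]
  rw [Finset.sum_congr rfl hterm, ← Finset.mul_sum]
  have hcoef : ((1+q⁻¹)/(1-q⁻¹)^n) * q = (-1 : ℚ_[p]) ^ n * q ^ n * ((1+q)/(1-q)^n) := by
    have e : (1 - q⁻¹) = -q⁻¹ * (1 - q) := by field_simp; ring
    rw [e, mul_pow, neg_pow, inv_pow]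
    have hneg : ((-1 : ℚ_[p]) ^ n) ≠ 0 := pow_ne_zero n (by norm_num)
    have hsq : ((-1:ℚ_[p])^n)*((-1)^n) = 1 := by
      rw [← pow_add, ← two_mul, pow_mul]; norm_num
    field_simp
    linear_combination (-(1+q)) * hsq
  calc ((1+q⁻¹)/(1-q⁻¹)^n) * (q * ∑ l ∈ Finset.range (n+1),
        (n.choose l : ℚ_[p]) * (-1) ^ l * q ^ ((l:ℤ) * (-1)) / (1 + q ^ (l+1)))
      = (((1+q⁻¹)/(1-q⁻¹)^n) * q) * ∑ l ∈ Finset.range (n+1),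
        (n.choose l : ℚ_[p]) * (-1) ^ l * q ^ ((l:ℤ) * (-1)) / (1 + q ^ (l+1)) := by ring
    _ = _ := by rw [hcoef]; ring
end

section
/- (Theorem 6) For all n, k ∈ ℕ with k ≤ n, Σ_{l=0}^{n−k} C(n−k,l)·(−1)^l·ξ_{k+l,q} = Σ_{l=0}^{k} C(k,l)·(−1)^{k+l}·ξ_{n−l,1/q}(2), where ξ_{m,1/q} denotes the q-Euler polynomial with parameter 1/q in place of q. -/
open Finset Filter

section aux
variable {p : ℕ} [Fact p.Prime]

lemma my_norm_two_eq_one (hp : Odd p) : ‖(2 : ℚ_[p])‖ = 1 := by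
  have h2 : ((2:ℤ) : ℚ_[p]) = 2 := by norm_num
  have hle : ‖(2:ℚ_[p])‖ ≤ 1 := by rw [← h2]; exact Padic.norm_int_le_one 2
  rcases lt_or_eq_of_le hle with h | h
  · exfalso
    rw [← h2, Padic.norm_intCast_lt_one_iff] at h
    have hpd : p ∣ 2 := by exact_mod_cast h
    have hle2 : p ≤ 2 := Nat.le_of_dvd (by norm_num) hpd
    have hp2 : 2 ≤ p := (Fact.out : p.Prime).two_le
    obtain ⟨t, ht⟩ := hp
    omega
  · exact h

lemma my_norm_eq_one {q : ℚ_[p]} (hq : ‖1 - q‖ < 1) : ‖q‖ = 1 := by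
  have h : q = 1 + (q - 1) := by ring
  have hne : ‖(1:ℚ_[p])‖ ≠ ‖q - 1‖ := by
    rw [norm_one, norm_sub_rev]; exact (ne_of_lt hq).symm
  rw [h, Padic.add_eq_max_of_ne hne, norm_one]
  exact max_eq_left (le_of_lt (by rw [norm_sub_rev]; exact hq))

lemma my_pow_sub_one_lt {q : ℚ_[p]} (hq : ‖1 - q‖ < 1) : ∀ j : ℕ, ‖q ^ j - 1‖ < 1 := by
  have hnq : ‖q‖ = 1 := my_norm_eq_one hq
  intro j
  induction j with
  | zero => simpa using zero_lt_one
  | succ j ih =>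
    have h : q ^ (j+1) - 1 = q ^ j * (q - 1) + (q ^ j - 1) := by ring
    rw [h]
    refine lt_of_le_of_lt (Padic.nonarchimedean _ _) ?_
    rw [max_lt_iff]
    refine ⟨?_, ih⟩
    rw [norm_mul, norm_pow, hnq, one_pow, one_mul, norm_sub_rev]
    exact hq

lemma my_one_add_pow_ne (hp : Odd p) {q : ℚ_[p]} (hq : ‖1 - q‖ < 1) (m : ℕ) :
    1 + q ^ (m+1) ≠ 0 := by
  intro h0
  have h : (1:ℚ_[p]) + q^(m+1) = 2 + (q^(m+1) - 1) := by ring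
  have hne : ‖(2:ℚ_[p])‖ ≠ ‖q^(m+1) - 1‖ := by
    rw [my_norm_two_eq_one hp]
    exact (ne_of_lt (my_pow_sub_one_lt hq (m+1))).symm
  have h1 : ‖(1:ℚ_[p]) + q^(m+1)‖ = 1 := by
    rw [h, Padic.add_eq_max_of_ne hne, my_norm_two_eq_one hp]
    exact max_eq_left (le_of_lt (my_pow_sub_one_lt hq (m+1)))
  rw [h0, norm_zero] at h1
  norm_num at h1

end aux

set_option maxHeartbeats 1000000 in
open Polynomial in
theorem stmt8 (p : ℕ) [Fact p.Prime] (hp : Odd p) (q : ℚ_[p]) (hq : ‖1 - q‖ < 1) (hq1 : q ≠ 1) (n k : ℕ) (hkn : k ≤ n) :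
    ∑ l ∈ Finset.range (n - k + 1), ((n - k).choose l : ℚ_[p]) * (-1) ^ l * xi q (k + l) 0
      = ∑ l ∈ Finset.range (k + 1), (k.choose l : ℚ_[p]) * (-1) ^ (k + l) * xi q⁻¹ (n - l) 2 := by
  classical
  have hD : (1:ℚ_[p]) - q ≠ 0 := sub_ne_zero.mpr (Ne.symm hq1)
  have hnq : ‖q‖ = 1 := my_norm_eq_one hq
  have hq0 : q ≠ 0 := by intro h; rw [h, norm_zero] at hnq; norm_num at hnq
  have hqi : ‖1 - q⁻¹‖ < 1 := by
    have : (1:ℚ_[p]) - q⁻¹ = (q - 1) * q⁻¹ := by field_simp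
    rw [this, norm_mul, norm_inv, hnq, inv_one, mul_one, norm_sub_rev]
    exact hq
  have hden : ∀ m : ℕ, (1:ℚ_[p]) + q ^ (m+1) ≠ 0 := my_one_add_pow_ne hp hq
  have hdeni : ∀ m : ℕ, (1:ℚ_[p]) + (q⁻¹) ^ (m+1) ≠ 0 := my_one_add_pow_ne hp hqi
  have hDi : (1:ℚ_[p]) - q⁻¹ ≠ 0 := sub_ne_zero.mpr fun h => hq1 (inv_eq_one.mp h.symm)
  set a : ℚ_[p] := (1 - q)⁻¹ with ha
  set w : ℕ → ℚ_[p] := fun j => (1 + q) / (1 + q ^ (j+1)) with hw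
  set F : Polynomial ℚ_[p] → ℚ_[p] := fun f => ∑ j ∈ Finset.range (n+1), f.coeff j * w j with hF
  have hFsum : ∀ (s : Finset ℕ) (f : ℕ → Polynomial ℚ_[p]),
      F (∑ i ∈ s, f i) = ∑ i ∈ s, F (f i) := by
    intro s f
    simp only [hF, finset_sum_coeff, Finset.sum_mul]
    exact Finset.sum_comm
  have hFsmul : ∀ (c : ℚ_[p]) (f : Polynomial ℚ_[p]), F (C c * f) = c * F f := by
    intro c f
    simp only [hF, coeff_C_mul, Finset.mul_sum, mul_assoc]
  have hFX : ∀ i, i ≤ n → F (X ^ i : Polynomial ℚ_[p]) = w i := by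
    intro i hi
    simp only [hF, coeff_X_pow, ite_mul, one_mul, zero_mul]
    rw [Finset.sum_ite_eq' (Finset.range (n+1)) i w]
    simp [Nat.lt_succ_of_le hi]
  set u : Polynomial ℚ_[p] := C a * (1 - X) with hu
  -- binomial expansion
  have hbin : ∀ (v : Polynomial ℚ_[p]) (m : ℕ),
      (1 - v) ^ m = ∑ i ∈ Finset.range (m+1), C ((m.choose i : ℚ_[p]) * (-1) ^ i) * v ^ i := by
    intro v m
    rw [show (1 - v) = -v + 1 by ring, add_pow]
    refine Finset.sum_congr rfl fun i _ => ?_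
    simp only [map_mul, map_pow, map_natCast, map_neg, map_one, one_pow, mul_one]
    ring
  -- Lemma A
  have hA : ∀ m, m ≤ n → F (u ^ m) = xi q m 0 := by
    intro m hm
    have hup : u ^ m = C (a ^ m) * (1 - X : Polynomial ℚ_[p]) ^ m := by
      rw [hu, mul_pow, map_pow]
    rw [hup, hbin, Finset.mul_sum, hFsum]
    have : ∀ i ∈ Finset.range (m+1),
        F (C (a ^ m) * (C ((m.choose i : ℚ_[p]) * (-1) ^ i) * X ^ i))
          = a ^ m * ((m.choose i : ℚ_[p]) * (-1) ^ i * w i) := by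
      intro i hi
      rw [← mul_assoc, ← map_mul, hFsmul, mul_assoc]
      rw [hFX i (le_trans (Nat.le_of_lt_succ (Finset.mem_range.mp hi)) hm)]
    rw [Finset.sum_congr rfl this, xi]
    rw [Finset.mul_sum]
    refine Finset.sum_congr rfl fun i _ => ?_
    have h0 : ((i:ℤ) * 0) = 0 := mul_zero _
    rw [h0, zpow_zero, hw, ha]
    rw [inv_pow]
    field_simp
  -- Lemma B
  have h1u : (1 : Polynomial ℚ_[p]) - u = C a * (X - C q) := by
    have hac : (1:ℚ_[p]) - a = -(a*q) := by rw [ha]; field_simp; ring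
    have hC : (1 : Polynomial ℚ_[p]) - C a = -(C a * C q) := by
      rw [← C_mul, ← C_1, ← C_sub, hac, map_neg]
    rw [hu]
    linear_combination hC
  have hB : ∀ m, m ≤ n → F ((1 - u) ^ m) = xi q⁻¹ m 2 := by
    intro m hm
    rw [h1u, mul_pow, ← map_pow, sub_pow, Finset.mul_sum, hFsum]
    have : ∀ i ∈ Finset.range (m+1),
        F (C (a ^ m) * ((-1:Polynomial ℚ_[p]) ^ (i+m) * X ^ i * (C q) ^ (m-i) * (m.choose i : Polynomial ℚ_[p])))
          = a ^ m * ((-1:ℚ_[p]) ^ (i+m) * q ^ (m-i) * (m.choose i : ℚ_[p]) * w i) := by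
      intro i hi
      have hrew : ((-1:Polynomial ℚ_[p]) ^ (i+m) * X ^ i * (C q) ^ (m-i) * (m.choose i : Polynomial ℚ_[p]))
          = C ((-1:ℚ_[p]) ^ (i+m) * q ^ (m-i) * (m.choose i : ℚ_[p])) * X ^ i := by
        simp only [map_mul, map_pow, map_neg, map_one, map_natCast]
        ring
      rw [hrew, ← mul_assoc, ← C_mul, hFsmul, mul_assoc,
        hFX i (le_trans (Nat.le_of_lt_succ (Finset.mem_range.mp hi)) hm)]
    rw [Finset.sum_congr rfl this, xi]
    rw [Finset.mul_sum]
    refine Finset.sum_congr rfl fun i hi => ?_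
    obtain ⟨d, hd⟩ := Nat.exists_eq_add_of_le (Nat.le_of_lt_succ (Finset.mem_range.mp hi))
    subst hd
    have hmi : i + d - i = d := by omega
    have hz : (q⁻¹) ^ ((i:ℤ) * 2) = (q ^ (2*i))⁻¹ := by
      rw [show ((i:ℤ) * 2) = ((2*i : ℕ) : ℤ) by push_cast; ring, zpow_natCast, inv_pow]
    rw [hmi, hz, hw, ha]
    have h2 : (1:ℚ_[p]) + q⁻¹ ^ (i+1) = (q ^ (i+1) + 1) / q ^ (i+1) := by
      rw [inv_pow]
      field_simp
    have hq1d : q ^ (i+1) + 1 ≠ 0 := by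
      intro h; apply hden i; rw [← h]; ring
    have hD' : q - 1 ≠ 0 := sub_ne_zero.mpr hq1
    have e1 : (1:ℚ_[p]) + q⁻¹ = (1+q)/q := by field_simp; ring
    have e2 : (1:ℚ_[p]) - q⁻¹ = -((1-q)/q) := by field_simp; ring
    rw [h2, e1, e2,
      show ((-((1-q)/q) : ℚ_[p]))^(i+d) = (-1)^(i+d) * ((1-q)^(i+d) / q^(i+d)) by
        rw [neg_pow, div_pow],
      show ((-1:ℚ_[p])^(i+(i+d))) = (-1)^i * (-1)^(i+d) from pow_add _ _ _]
    field_simp [hD, hD', hq1d, hden i]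
    have s4 : (-1:ℚ_[p])^(i+d) * (-1)^(i+d) = 1 := by
      rw [← pow_add, ← two_mul, pow_mul]; norm_num
    have s5 : ((-1:ℚ_[p])^(i+d))^2 = 1 := by rw [sq, s4]
    have s6 : (1/(1-q))^(i+d) * (1-q)^(i+d) = 1 := by
      rw [div_pow, one_pow, div_mul_cancel₀ _ (pow_ne_zero _ hD)]
    linear_combination ((1/(1-q))^(i+d) * (1-q)^(i+d) * (q * q ^ d * ((i + d).choose i : ℚ_[p]) * (1 + q) * q ^ (2 * i) * (q ^ (i + 1) + 1))) * s5 + (q * q ^ d * ((i + d).choose i : ℚ_[p]) * (1 + q) * q ^ (2 * i) * (q ^ (i + 1) + 1)) * s6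
  have hL : ∑ l ∈ Finset.range (n - k + 1), ((n - k).choose l : ℚ_[p]) * (-1) ^ l * xi q (k + l) 0
      = F (u ^ k * (1 - u) ^ (n - k)) := by
    have step : ∀ l ∈ Finset.range (n-k+1),
        ((n - k).choose l : ℚ_[p]) * (-1) ^ l * xi q (k + l) 0
          = F (C (((n-k).choose l : ℚ_[p]) * (-1)^l) * u ^ (k+l)) := by
      intro l hl
      rw [hFsmul, hA (k+l) (by have := Finset.mem_range.mp hl; omega)]
    rw [Finset.sum_congr rfl step, ← hFsum]
    congr 1
    rw [hbin u (n-k), Finset.mul_sum]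
    refine Finset.sum_congr rfl fun l _ => ?_
    rw [pow_add]
    ring
  have hR : ∑ l ∈ Finset.range (k + 1), (k.choose l : ℚ_[p]) * (-1) ^ (k + l) * xi q⁻¹ (n - l) 2
      = F ((1 - u) ^ (n - k) * u ^ k) := by
    rw [← Finset.sum_range_reflect]
    have step : ∀ j ∈ Finset.range (k+1),
        (k.choose (k + 1 - 1 - j) : ℚ_[p]) * (-1) ^ (k + (k + 1 - 1 - j)) * xi q⁻¹ (n - (k + 1 - 1 - j)) 2
          = F (C ((k.choose j : ℚ_[p]) * (-1)^j) * ((1-u) ^ (n-k) * (1-u) ^ j)) := by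
      intro j hj
      have hjk : j ≤ k := Nat.le_of_lt_succ (Finset.mem_range.mp hj)
      have h1 : k + 1 - 1 - j = k - j := by omega
      have h2 : n - (k - j) = (n - k) + j := by omega
      have h3 : (k.choose (k - j) : ℚ_[p]) = (k.choose j : ℚ_[p]) := by
        exact_mod_cast Nat.choose_symm hjk
      have h4 : ((-1 : ℚ_[p])) ^ (k + (k - j)) = (-1)^j := by
        rw [show k + (k - j) = j + 2*(k-j) by omega, pow_add, pow_mul]
        norm_num
      rw [h1, h2, h3, h4, ← hB ((n-k)+j) (by omega), hFsmul, ← pow_add]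
    rw [Finset.sum_congr rfl step, ← hFsum]
    congr 1
    have : (u : Polynomial ℚ_[p]) ^ k = (1 - (1 - u)) ^ k := by rw [sub_sub_cancel]
    rw [this, hbin (1-u) k, Finset.mul_sum]
    refine Finset.sum_congr rfl fun j _ => ?_
    ring
  rw [hL, hR, mul_comm]
end
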